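/- Let G be a finite group with Φ(G) = 1, and let N₁ = T be a minimal normal subgroup with T nonabelian simple, and N₂ = (C_p)^a another minimal normal subgroup with a ≥ 2. Suppose J < T is a subgroup with |J|² > |T|. Then H₁ = J and H₂ = J × K, where K < N₂ has order p^{a−1}, are non-conjugate core-free subgroups of G with b(G, H_i) ≥ 3 for i = 1,2; in particular α(G) ≥ 2. -/

import Mathlib

open Pointwise


/-- The conjugate subgroup `g⁻¹ H g`. -/
def conjSub {G : Type*} [Group G] (H : Subgroup G) (g : G) : Subgroup G :=
  H.map (MulAut.conj g).toMonoidHom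

/-- `N` is a minimal normal subgroup of `G`. -/
def IsMinNormal {G : Type*} [Group G] (N : Subgroup G) : Prop :=
  N ≠ ⊥ ∧ N.Normal ∧ ∀ M : Subgroup G, M.Normal → M ≤ N → M = ⊥ ∨ M = N

/-- Let `G` be a finite group with `Φ(G) = 1`, with a minimal normal subgroup `N₁ = T`
that is nonabelian simple, and another minimal normal subgroup `N₂ ≅ (C_p)^a` with
`a ≥ 2`. If `J < N₁` satisfies `|J|² > |N₁|`, then for any `K < N₂` of order `p^(a-1)`,
the subgroups `H₁ = J` and `H₂ = J × K` are non-conjugate core-free subgroups of `G`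
with `b(G, Hᵢ) ≥ 3` for `i = 1, 2`; in particular `α(G) ≥ 2`. -/

lemma inter_ne_bot_of_sq {G : Type*} [Group G] [Finite G] (N A B : Subgroup G)
    (hA : A ≤ N) (hB : B ≤ N) (h : Nat.card N < Nat.card A * Nat.card B) :
    A ⊓ B ≠ ⊥ := by
  classical
  let B' := B.subgroupOf N
  have hBcard : Nat.card B' = Nat.card B :=
    Nat.card_congr (Subgroup.subgroupOfEquivOfLe hB).toEquiv
  have hindex : Nat.card B' * B'.index = Nat.card N := Subgroup.card_mul_index B'
  have hq : Nat.card (N ⧸ B') = B'.index := (Subgroup.index_eq_card B').symm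
  have hBpos : 0 < Nat.card B := Nat.card_pos
  have hlt : Nat.card (N ⧸ B') < Nat.card A := by
    rw [hq]
    by_contra hle
    push_neg at hle
    have h2 : Nat.card A * Nat.card B ≤ Nat.card N := by
      calc Nat.card A * Nat.card B ≤ B'.index * Nat.card B := Nat.mul_le_mul_right _ hle
        _ = Nat.card B' * B'.index := by rw [hBcard, mul_comm]
        _ = Nat.card N := hindex
    omega
  have : ∃ a₁ a₂ : A, a₁ ≠ a₂ ∧
      (QuotientGroup.mk (⟨a₁, hA a₁.2⟩ : N) : N ⧸ B') = QuotientGroup.mk ⟨a₂, hA a₂.2⟩ := by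
    let _ : Fintype A := Fintype.ofFinite A
    let _ : Fintype (N ⧸ B') := Fintype.ofFinite _
    obtain ⟨a₁, a₂, hne, heq⟩ := Fintype.exists_ne_map_eq_of_card_lt
      (fun a : A => (QuotientGroup.mk (⟨a, hA a.2⟩ : N) : N ⧸ B'))
      (by rwa [← Nat.card_eq_fintype_card, ← Nat.card_eq_fintype_card])
    exact ⟨a₁, a₂, hne, heq⟩
  obtain ⟨a₁, a₂, hne, heq⟩ := this
  rw [QuotientGroup.eq] at heq
  have hx : (a₁ : G)⁻¹ * a₂ ∈ B := heq
  have hxA : (a₁ : G)⁻¹ * a₂ ∈ A := A.mul_mem (A.inv_mem a₁.2) a₂.2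
  intro hbot
  have : (a₁ : G)⁻¹ * a₂ ∈ A ⊓ B := ⟨hxA, hx⟩
  rw [hbot, Subgroup.mem_bot, inv_mul_eq_one] at this
  exact hne (Subtype.ext this)

lemma mem_sup_decomp {G : Type*} [Group G] (J K : Subgroup G)
    (hcomm : ∀ j ∈ J, ∀ k ∈ K, Commute j k) {x : G} (hx : x ∈ J ⊔ K) :
    ∃ j ∈ J, ∃ k ∈ K, x = j * k := by
  let S : Subgroup G :=
    { carrier := {x | ∃ j ∈ J, ∃ k ∈ K, x = j * k}
      one_mem' := ⟨1, J.one_mem, 1, K.one_mem, by simp⟩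
      mul_mem' := by
        rintro a b ⟨j1, hj1, k1, hk1, rfl⟩ ⟨j2, hj2, k2, hk2, rfl⟩
        refine ⟨j1 * j2, J.mul_mem hj1 hj2, k1 * k2, K.mul_mem hk1 hk2, ?_⟩
        have h := (hcomm j2 hj2 k1 hk1).eq.symm
        calc j1 * k1 * (j2 * k2) = j1 * (k1 * j2) * k2 := by group
          _ = j1 * (j2 * k1) * k2 := by rw [h]
          _ = j1 * j2 * (k1 * k2) := by group
      inv_mem' := by
        rintro a ⟨j, hj, k, hk, rfl⟩
        refine ⟨j⁻¹, J.inv_mem hj, k⁻¹, K.inv_mem hk, ?_⟩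
        have h := ((hcomm j hj k hk).inv_inv).eq
        rw [mul_inv_rev, ← h] }
  have hJS : J ≤ S := fun j hj => ⟨j, hj, 1, K.one_mem, (mul_one j).symm⟩
  have hKS : K ≤ S := fun k hk => ⟨1, J.one_mem, k, hk, (one_mul k).symm⟩
  exact sup_le hJS hKS hx

theorem stmt_18 {G : Type*} [Group G] [Finite G] (hΦ : frattini G = ⊥)
    (N₁ N₂ : Subgroup G) (hmin₁ : IsMinNormal N₁) (hmin₂ : IsMinNormal N₂)
    (hsimple : IsSimpleGroup N₁) (hnab : ∃ x ∈ N₁, ∃ y ∈ N₁, x * y ≠ y * x)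
    (p a : ℕ) (hp : p.Prime) (ha : 2 ≤ a)
    (hiso : Nonempty (N₂ ≃* Multiplicative (Fin a → ZMod p)))
    (J : Subgroup G) (hJ : J < N₁) (hJbig : Nat.card N₁ < Nat.card J ^ 2)
    (K : Subgroup G) (hK : K < N₂) (hKcard : Nat.card K = p ^ (a - 1)) :
    J.normalCore = ⊥ ∧ (J ⊔ K).normalCore = ⊥ ∧
      (∀ g : G, conjSub J g ≠ J ⊔ K) ∧
      (∀ g₁ g₂ : G, conjSub J g₁ ⊓ conjSub J g₂ ≠ ⊥) ∧
      (∀ g₁ g₂ : G, conjSub (J ⊔ K) g₁ ⊓ conjSub (J ⊔ K) g₂ ≠ ⊥) := by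
  obtain ⟨hN₁ne, hN₁normal, hN₁min⟩ := hmin₁
  obtain ⟨hN₂ne, hN₂normal, hN₂min⟩ := hmin₂
  -- N₂ is abelian
  have habel : ∀ x ∈ N₂, ∀ y ∈ N₂, x * y = y * x := by
    obtain ⟨e⟩ := hiso
    intro x hx y hy
    have : (⟨x, hx⟩ : N₂) * ⟨y, hy⟩ = ⟨y, hy⟩ * ⟨x, hx⟩ := by
      apply e.injective
      rw [map_mul, map_mul, mul_comm]
    exact Subtype.ext_iff.mp this
  -- N₁ ⊓ N₂ = ⊥
  have hdis : N₁ ⊓ N₂ = ⊥ := by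
    rcases hN₁min (N₁ ⊓ N₂) (Subgroup.normal_inf_normal N₁ N₂) inf_le_left with h | h
    · exact h
    · exfalso
      have h12 : N₁ ≤ N₂ := h ▸ inf_le_right
      rcases hN₂min N₁ hN₁normal h12 with h' | h'
      · exact hN₁ne h'
      · obtain ⟨x, hx, y, hy, hxy⟩ := hnab
        exact hxy (habel x (h' ▸ hx) y (h' ▸ hy))
  have hcomm12 : ∀ x ∈ N₁, ∀ y ∈ N₂, Commute x y := fun x hx y hy =>
    Subgroup.commute_of_normal_of_disjoint N₁ N₂ hN₁normal hN₂normal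
      (disjoint_iff.mpr hdis) x y hx hy
  have hJK_comm : ∀ j ∈ J, ∀ k ∈ K, Commute j k := fun j hj k hk =>
    hcomm12 j (hJ.le hj) k (hK.le hk)
  have hdecomp : ∀ x ∈ J ⊔ K, ∃ j ∈ J, ∃ k ∈ K, x = j * k := fun x hx =>
    mem_sup_decomp J K hJK_comm hx
  -- cardinalities
  have hN₂card : Nat.card N₂ = p ^ a := by
    obtain ⟨e⟩ := hiso
    rw [Nat.card_congr e.toEquiv]
    show Nat.card (Fin a → ZMod p) = p ^ a
    rw [Nat.card_fun, Nat.card_zmod, Nat.card_eq_fintype_card, Fintype.card_fin]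
  have hJpos : 0 < Nat.card J := Nat.card_pos
  have hKne1 : Nat.card K ≠ 1 := by
    rw [hKcard]
    have : 1 < p ^ (a - 1) := Nat.one_lt_pow (by omega) hp.one_lt
    omega
  -- J ⊔ K contains neither N₁ nor N₂
  have hN₁notle : ¬N₁ ≤ J ⊔ K := by
    intro hle
    apply hJ.not_ge
    intro n hn
    obtain ⟨j, hj, k, hk, rfl⟩ := hdecomp n (hle hn)
    have hkmem : k ∈ N₁ ⊓ N₂ :=
      ⟨by simpa using N₁.mul_mem (N₁.inv_mem (hJ.le hj)) hn, hK.le hk⟩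
    rw [hdis, Subgroup.mem_bot] at hkmem
    simpa [hkmem] using hj
  have hN₂notle : ¬N₂ ≤ J ⊔ K := by
    intro hle
    apply hK.not_ge
    intro n hn
    obtain ⟨j, hj, k, hk, rfl⟩ := hdecomp n (hle hn)
    have hjmem : j ∈ N₁ ⊓ N₂ :=
      ⟨hJ.le hj, by simpa using N₂.mul_mem hn (N₂.inv_mem (hK.le hk))⟩
    rw [hdis, Subgroup.mem_bot] at hjmem
    simpa [hjmem] using hk
  -- goal 1
  have goal1 : J.normalCore = ⊥ := by
    rcases hN₁min J.normalCore J.normalCore_normal (J.normalCore_le.trans hJ.le) with h | h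
    · exact h
    · exact absurd (h ▸ J.normalCore_le) hJ.not_ge
  -- goal 2
  have goal2 : (J ⊔ K).normalCore = ⊥ := by
    set M := (J ⊔ K).normalCore with hM
    have hMnormal : M.Normal := Subgroup.normalCore_normal _
    have hMle : M ≤ J ⊔ K := Subgroup.normalCore_le _
    have hMN₁ : M ⊓ N₁ = ⊥ := by
      have : (M ⊓ N₁).Normal :=
        ⟨fun n hn g => ⟨hMnormal.conj_mem n hn.1 g, hN₁normal.conj_mem n hn.2 g⟩⟩
      rcases hN₁min (M ⊓ N₁) this inf_le_right with h | h
      · exact h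
      · exact absurd ((h ▸ inf_le_left : N₁ ≤ M).trans hMle) hN₁notle
    have hMc : ∀ m ∈ M, ∀ n ∈ N₁, Commute m n := fun m hm n hn =>
      Subgroup.commute_of_normal_of_disjoint M N₁ hMnormal hN₁normal
        (disjoint_iff.mpr hMN₁) m n hm hn
    have hMN₂ : M ≤ N₂ := by
      intro m hm
      obtain ⟨j, hj, k, hk, rfl⟩ := hdecomp m (hMle hm)
      have hjc : ∀ n ∈ N₁, j * n = n * j := by
        intro n hn
        have h1 := (hMc _ hm n hn).eq
        have h2 := (hcomm12 n hn k (hK.le hk)).eq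
        -- h1 : j * k * n = n * (j * k), h2 : n * k = k * n
        have : j * n * k = n * j * k := by
          calc j * n * k = j * (n * k) := by group
            _ = j * (k * n) := by rw [h2]
            _ = j * k * n := by group
            _ = n * (j * k) := h1
            _ = n * j * k := by group
        exact mul_right_cancel this
      have hj1 : j = 1 := by
        rcases hsimple.eq_bot_or_eq_top_of_normal (Subgroup.center N₁)
          inferInstance with hc | hc
        · have hmem : (⟨j, hJ.le hj⟩ : N₁) ∈ Subgroup.center N₁ := by
            rw [Subgroup.mem_center_iff]
            intro g
            exact Subtype.ext ((hjc g g.2).symm)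
          rw [hc, Subgroup.mem_bot] at hmem
          exact Subtype.ext_iff.mp hmem
        · exfalso
          obtain ⟨x, hx, y, hy, hxy⟩ := hnab
          have hxc : (⟨x, hx⟩ : N₁) ∈ Subgroup.center N₁ := hc ▸ Subgroup.mem_top _
          rw [Subgroup.mem_center_iff] at hxc
          exact hxy (Subtype.ext_iff.mp (hxc ⟨y, hy⟩)).symm
      rw [hj1, one_mul]
      exact hK.le hk
    rcases hN₂min M hMnormal hMN₂ with h | h
    · exact h
    · exact absurd (h ▸ hMle) hN₂notle
  -- conjugation facts
  have hconj_card : ∀ (H : Subgroup G) (g : G), Nat.card (conjSub H g) = Nat.card H := by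
    intro H g
    exact (Nat.card_congr (H.equivMapOfInjective (MulAut.conj g).toMonoidHom
      (MulAut.conj g).injective).toEquiv).symm
  have hconj_le : ∀ (H N : Subgroup G), N.Normal → H ≤ N → ∀ g, conjSub H g ≤ N := by
    intro H N hN hHN g x hx
    obtain ⟨y, hy, rfl⟩ := hx
    exact hN.conj_mem y (hHN hy) g
  -- goal 3
  have goal3 : ∀ g : G, conjSub J g ≠ J ⊔ K := by
    intro g heq
    have hcard : Nat.card (J ⊔ K : Subgroup G) = Nat.card J := by
      rw [← heq, hconj_card]
    have hJeq : J = J ⊔ K := Subgroup.eq_of_le_of_card_ge le_sup_left hcard.le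
    have hKJ : K ≤ J := le_sup_right.trans hJeq.ge
    have hKbot : K ≤ ⊥ := hdis ▸ le_inf (hKJ.trans hJ.le) hK.le
    have : K = ⊥ := le_bot_iff.mp hKbot
    rw [this, Subgroup.card_bot] at hKne1
    exact hKne1 rfl
  -- goal 4
  have goal4 : ∀ g₁ g₂ : G, conjSub J g₁ ⊓ conjSub J g₂ ≠ ⊥ := by
    intro g₁ g₂
    apply inter_ne_bot_of_sq N₁
    · exact hconj_le J N₁ hN₁normal hJ.le g₁
    · exact hconj_le J N₁ hN₁normal hJ.le g₂
    · rw [hconj_card, hconj_card, ← pow_two]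
      exact hJbig
  -- goal 5
  have hsupnormal : (N₁ ⊔ N₂).Normal := Subgroup.sup_normal N₁ N₂
  have hJKle : J ⊔ K ≤ N₁ ⊔ N₂ :=
    sup_le (hJ.le.trans le_sup_left) (hK.le.trans le_sup_right)
  have hsup_card_le : Nat.card (N₁ ⊔ N₂ : Subgroup G) ≤ Nat.card N₁ * Nat.card N₂ := by
    have hsurj : Function.Surjective (fun q : N₁ × N₂ =>
        (⟨q.1 * q.2, Subgroup.mul_mem _ (Subgroup.mem_sup_left q.1.2) (Subgroup.mem_sup_right q.2.2)⟩ :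
          (N₁ ⊔ N₂ : Subgroup G))) := by
      rintro ⟨z, hz⟩
      have hz' : z ∈ ((N₁ : Set G) * (N₂ : Set G)) := by
        rw [← Subgroup.mul_normal N₁ N₂]
        exact hz
      obtain ⟨x, hx, y, hy, hxy⟩ := hz'
      exact ⟨(⟨x, hx⟩, ⟨y, hy⟩), Subtype.ext hxy⟩
    simpa [Nat.card_prod] using Nat.card_le_card_of_surjective _ hsurj
  have hJK_card_ge : Nat.card J * Nat.card K ≤ Nat.card (J ⊔ K : Subgroup G) := by
    have hinj : Function.Injective (fun q : J × K =>
        (⟨q.1 * q.2, Subgroup.mul_mem _ (Subgroup.mem_sup_left q.1.2) (Subgroup.mem_sup_right q.2.2)⟩ :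
          (J ⊔ K : Subgroup G))) := by
      rintro ⟨⟨j1, hj1⟩, ⟨k1, hk1⟩⟩ ⟨⟨j2, hj2⟩, ⟨k2, hk2⟩⟩ heq
      have h : j1 * k1 = j2 * k2 := Subtype.ext_iff.mp heq
      have hkey : j2⁻¹ * j1 = k2 * k1⁻¹ := by
        calc j2⁻¹ * j1 = j2⁻¹ * (j1 * k1) * k1⁻¹ := by group
          _ = j2⁻¹ * (j2 * k2) * k1⁻¹ := by rw [h]
          _ = k2 * k1⁻¹ := by group
      have hmem : j2⁻¹ * j1 ∈ N₁ ⊓ N₂ := by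
        constructor
        · exact N₁.mul_mem (N₁.inv_mem (hJ.le hj2)) (hJ.le hj1)
        · rw [hkey]
          exact N₂.mul_mem (hK.le hk2) (N₂.inv_mem (hK.le hk1))
      rw [hdis, Subgroup.mem_bot] at hmem
      have hjeq : j1 = j2 := (inv_mul_eq_one.mp hmem).symm
      have hkeq : k2 = k1 := by
        rw [hmem] at hkey
        exact mul_inv_eq_one.mp hkey.symm
      exact Prod.ext (Subtype.ext hjeq) (Subtype.ext hkeq.symm)
    simpa [Nat.card_prod] using Nat.card_le_card_of_injective _ hinj
  have goal5 : ∀ g₁ g₂ : G, conjSub (J ⊔ K) g₁ ⊓ conjSub (J ⊔ K) g₂ ≠ ⊥ := by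
    intro g₁ g₂
    apply inter_ne_bot_of_sq (N₁ ⊔ N₂)
    · exact hconj_le _ _ hsupnormal hJKle g₁
    · exact hconj_le _ _ hsupnormal hJKle g₂
    · rw [hconj_card, hconj_card]
      calc Nat.card (N₁ ⊔ N₂ : Subgroup G) ≤ Nat.card N₁ * Nat.card N₂ := hsup_card_le
        _ = Nat.card N₁ * p ^ a := by rw [hN₂card]
        _ < Nat.card J ^ 2 * p ^ a := by
            exact (Nat.mul_lt_mul_right (Nat.pow_pos (n := a) hp.pos)).mpr hJbig
        _ ≤ Nat.card J ^ 2 * (p ^ (a - 1)) ^ 2 := by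
            apply Nat.mul_le_mul_left
            rw [← pow_mul]
            exact Nat.pow_le_pow_right hp.one_lt.le (by omega)
        _ = (Nat.card J * p ^ (a - 1)) ^ 2 := (mul_pow _ _ 2).symm
        _ = (Nat.card J * Nat.card K) ^ 2 := by rw [hKcard]
        _ ≤ Nat.card (J ⊔ K : Subgroup G) ^ 2 := Nat.pow_le_pow_left hJK_card_ge 2
        _ = Nat.card (J ⊔ K : Subgroup G) * Nat.card (J ⊔ K : Subgroup G) := by ring
  exact ⟨goal1, goal2, goal3, goal4, goal5⟩
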